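/- (Theorem 5, even period case) Suppose the minimal period π is even and set s = π/2. Then: (a) Q_{s+i} = Q_{s−i} for all i ∈ ℤ; (b) Q_s ≠ Q_0; (c) P_s = P_{s−1}; and (d) Q_s divides 2N. In particular the halfway point of the period is a symmetry point yielding a divisor of 2N. -/
import Mathlib


/-- Two-sided continued fraction data of the normalized square root of `N`:
`N ≡ 1 (mod 4)` is positive and not a perfect square, `r = ⌊√N⌋`,
`P (-1) = r - 1` if `r` is even and `r` otherwise, `Q 0 = 2`, and the forward
(`i ≥ 0`) and backward (`i ≤ -1`) recursions (with `Int.fdiv` the floor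
division on `ℤ`, so that `Int.fdiv x y = ⌊x / y⌋`). -/
theorem stmt_10 (N : ℤ) (hNpos : 0 < N) (hN4 : N % 4 = 1) (hNsq : ¬ IsSquare N)
    (r : ℤ) (hr : r = ⌊Real.sqrt (N : ℝ)⌋)
    (P Q b : ℤ → ℤ)
    (hP1 : P (-1) = if 2 ∣ r then r - 1 else r)
    (hQ0 : Q 0 = 2)
    (hbf : ∀ i : ℤ, 0 ≤ i → b i = Int.fdiv (r + P (i - 1)) (Q i))
    (hPf : ∀ i : ℤ, 0 ≤ i → P i = b i * Q i - P (i - 1))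
    (hQf : ∀ i : ℤ, 0 ≤ i → Q (i + 1) = Int.fdiv (N - P i ^ 2) (Q i))
    (hQb : ∀ i : ℤ, i ≤ -1 → Q i = Int.fdiv (N - P i ^ 2) (Q (i + 1)))
    (hbb : ∀ i : ℤ, i ≤ -1 → b i = Int.fdiv (r + P i) (Q i))
    (hPb : ∀ i : ℤ, i ≤ -1 → P (i - 1) = b i * Q i - P i) (T : ℤ) (hTpos : 0 < T)
    (hTper : ∀ i : ℤ, P (i + T) = P i ∧ Q (i + T) = Q i)
    (hTmin : ∀ k : ℤ, 0 < k → (∀ i : ℤ, P (i + k) = P i ∧ Q (i + k) = Q i) → T ≤ k)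
    (hTeven : 2 ∣ T) (s : ℤ) (hs : s = T / 2) :
    (∀ i : ℤ, Q (s + i) = Q (s - i)) ∧ Q s ≠ Q 0 ∧ P s = P (s - 1) ∧ Q s ∣ 2 * N := by
  -- fdiv helpers
  have fdiv_bounds : ∀ a q : ℤ, 0 < q → q * (a.fdiv q) ≤ a ∧ a < q * (a.fdiv q) + q := by
    intro a q h
    rw [Int.fdiv_eq_ediv_of_nonneg _ h.le]
    have h1 := Int.mul_ediv_add_emod a q
    have h2 := Int.emod_nonneg a (by omega : q ≠ 0)
    have h3 := Int.emod_lt_of_pos a h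
    omega
  have fdiv_exact : ∀ a q : ℤ, q ≠ 0 → q ∣ a → q * (a.fdiv q) = a := by
    intro a q h hd
    rw [Int.fdiv_eq_ediv_of_dvd hd]; exact Int.mul_ediv_cancel' hd
  set x : ℝ := Real.sqrt (N : ℝ) with hxdef
  have hx0 : 0 ≤ x := Real.sqrt_nonneg _
  have hxsq : x ^ 2 = (N : ℝ) := Real.sq_sqrt (by positivity)
  have hxne : ∀ m : ℤ, (m : ℝ) ≠ x := by
    intro m hm
    apply hNsq
    refine ⟨m, ?_⟩
    have h1 : ((m : ℝ)) * m = (N : ℝ) := by rw [hm, ← sq]; exact hxsq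
    exact_mod_cast h1.symm
  have hrle : (r : ℝ) ≤ x := by rw [hr]; exact Int.floor_le x
  have hrlt : (r : ℝ) < x := lt_of_le_of_ne hrle (hxne r)
  have hrlt1 : x < (r : ℝ) + 1 := by
    rw [hr]; exact_mod_cast Int.lt_floor_add_one x
  have hN1 : N ≠ 1 := fun h => hNsq ⟨1, by omega⟩
  have hN5 : 5 ≤ N := by omega
  have hx2 : (2 : ℝ) < x := by
    have h5 : (5 : ℝ) ≤ (N : ℝ) := by exact_mod_cast hN5
    nlinarith [hxsq, hx0]
  have hr2 : 2 ≤ r := by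
    have h1 : (1 : ℝ) < (r : ℝ) := by linarith
    exact_mod_cast (by exact_mod_cast h1 : (1:ℤ) < r)
  have hPm1a : r - 1 ≤ P (-1) ∧ P (-1) ≤ r := by rw [hP1]; split_ifs <;> omega
  have hPm1odd : P (-1) % 2 = 1 := by rw [hP1]; split_ifs with h <;> omega
  have hNodd : N % 2 = 1 := by omega
  -- P 0 = P (-1)
  have key0 : P 0 = P (-1) := by
    have h0 := hPf 0 le_rfl
    have hb0 := hbf 0 le_rfl
    rw [show (0:ℤ) - 1 = -1 from by ring, hQ0] at h0 hb0
    obtain ⟨u, v⟩ := fdiv_bounds (r + P (-1)) 2 (by norm_num)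
    rw [← hb0] at u v
    omega
  -- main forward invariant
  have inv : ∀ n : ℕ, 0 < Q (n:ℤ) ∧ Q (n:ℤ) ∣ (N - P ((n:ℤ)-1)^2) ∧
      Q (n:ℤ) ∣ (N - P (n:ℤ)^2) ∧
      ((P ((n:ℤ)-1) : ℝ) < x ∧ x - Q (n:ℤ) < P ((n:ℤ)-1) ∧ (Q (n:ℤ) : ℝ) < x + P ((n:ℤ)-1)) := by
    intro n
    induction n with
    | zero =>
      rw [show ((0:ℕ):ℤ) = 0 from by norm_num, show (0:ℤ) - 1 = -1 from by ring, hQ0, key0]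
      have hdvd : (2:ℤ) ∣ N - P (-1)^2 := by
        have h2 : (P (-1) * P (-1)) % 2 = (P (-1) % 2) * (P (-1) % 2) % 2 := Int.mul_emod _ _ _
        rw [hPm1odd] at h2
        rw [pow_two]
        omega
      have c1 : ((r : ℝ)) - 1 ≤ (P (-1) : ℝ) := by exact_mod_cast hPm1a.1
      have c2 : (P (-1) : ℝ) ≤ (r : ℝ) := by exact_mod_cast hPm1a.2
      have c3 : (2 : ℝ) ≤ (r : ℝ) := by exact_mod_cast hr2
      refine ⟨by norm_num, hdvd, hdvd, by push_cast; linarith, by push_cast; linarith,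
        by push_cast; linarith⟩
    | succ n ih =>
      obtain ⟨hq, hdvd1, hdvd2, hb1, hb2, hb3⟩ := ih
      have hn0 : (0:ℤ) ≤ (n:ℤ) := Int.natCast_nonneg n
      have hbn := hbf (n:ℤ) hn0
      have hpn := hPf (n:ℤ) hn0
      have hqn := hQf (n:ℤ) hn0
      obtain ⟨u, v⟩ := fdiv_bounds (r + P ((n:ℤ)-1)) (Q (n:ℤ)) hq
      rw [← hbn] at u v
      rw [mul_comm] at hpn
      have ip1 : P (n:ℤ) ≤ r := by linarith
      have ip2 : r + 1 - Q (n:ℤ) ≤ P (n:ℤ) := by linarith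
      have rp1 : (P (n:ℤ) : ℝ) ≤ (r : ℝ) := by exact_mod_cast ip1
      have rp2 : (r : ℝ) + 1 - (Q (n:ℤ) : ℝ) ≤ (P (n:ℤ) : ℝ) := by
        exact_mod_cast ip2
      have hqR : (0:ℝ) < (Q (n:ℤ) : ℝ) := by exact_mod_cast hq
      -- new bounds for P n
      have nb1 : (P (n:ℤ) : ℝ) < x := lt_of_le_of_lt rp1 hrlt
      have nb2 : x - (Q (n:ℤ) : ℝ) < (P (n:ℤ) : ℝ) := by linarith
      -- exactness
      have hex : Q (n:ℤ) * Q ((n:ℤ)+1) = N - P (n:ℤ)^2 := by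
        rw [hqn]; exact fdiv_exact _ _ hq.ne' hdvd2
      have hexR : (Q (n:ℤ) : ℝ) * (Q ((n:ℤ)+1) : ℝ) = x^2 - (P (n:ℤ) : ℝ)^2 := by
        rw [hxsq]; exact_mod_cast hex
      have hxA : (0:ℝ) < x + (P (n:ℤ) : ℝ) := by linarith
      have hxA2 : (0:ℝ) < x - (P (n:ℤ) : ℝ) := by linarith
      have hq1R : (0:ℝ) < (Q ((n:ℤ)+1) : ℝ) := by
        by_contra hcon
        push_neg at hcon
        have h1 : (Q (n:ℤ):ℝ) * (Q ((n:ℤ)+1):ℝ) ≤ 0 :=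
          mul_nonpos_of_nonneg_of_nonpos hqR.le hcon
        nlinarith [mul_pos hxA2 hxA, hexR]
      have hq1 : 0 < Q ((n:ℤ)+1) := by exact_mod_cast hq1R
      -- new dvd's
      have hdvd1' : Q ((n:ℤ)+1) ∣ N - P (n:ℤ)^2 := ⟨Q (n:ℤ), by rw [← hex]; ring⟩
      have hdvd2' : Q ((n:ℤ)+1) ∣ N - P ((n:ℤ)+1)^2 := by
        obtain ⟨c, hc⟩ := hdvd1'
        have hpf1 := hPf ((n:ℤ)+1) (by omega)
        rw [show (n:ℤ)+1-1 = (n:ℤ) from by ring] at hpf1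
        have hsum : P ((n:ℤ)+1) + P (n:ℤ) = b ((n:ℤ)+1) * Q ((n:ℤ)+1) := by linarith
        exact ⟨c + (P (n:ℤ) - P ((n:ℤ)+1)) * b ((n:ℤ)+1), by
          linear_combination hc + (P (n:ℤ) - P ((n:ℤ)+1)) * hsum⟩
      -- b n ≥ 1
      have ibq : Q (n:ℤ) ≤ r + P ((n:ℤ)-1) := by
        have h1 : (Q (n:ℤ) : ℝ) < ((r + 1 + P ((n:ℤ)-1) : ℤ) : ℝ) := by push_cast; linarith
        have h2 : Q (n:ℤ) < r + 1 + P ((n:ℤ)-1) := by exact_mod_cast h1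
        omega
      have hbpos : 1 ≤ b (n:ℤ) := by
        by_contra hcon
        push_neg at hcon
        have h1 : Q (n:ℤ) * b (n:ℤ) ≤ 0 :=
          mul_nonpos_of_nonneg_of_nonpos hq.le (by omega)
        linarith
      have hbposR : (1:ℝ) ≤ (b (n:ℤ) : ℝ) := by exact_mod_cast hbpos
      have hpnR : (P (n:ℤ) : ℝ) = (Q (n:ℤ) : ℝ) * (b (n:ℤ) : ℝ) - (P ((n:ℤ)-1) : ℝ) := by
        exact_mod_cast hpn
      have nb4pre : (Q (n:ℤ) : ℝ) < x + (P (n:ℤ) : ℝ) := by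
        have h1 : (Q (n:ℤ) : ℝ) * 1 ≤ (Q (n:ℤ) : ℝ) * (b (n:ℤ) : ℝ) :=
          mul_le_mul_of_nonneg_left hbposR hqR.le
        rw [mul_one] at h1
        linarith
      -- new real bounds for Q (n+1)
      have nb2' : x - (P (n:ℤ) : ℝ) < (Q (n:ℤ) : ℝ) := by linarith
      have hfac : (x + (P (n:ℤ):ℝ)) * (x - (P (n:ℤ):ℝ)) = (Q (n:ℤ):ℝ) * (Q ((n:ℤ)+1):ℝ) := by
        linear_combination -hexR
      have nb3 : x - (Q ((n:ℤ)+1) : ℝ) < (P (n:ℤ) : ℝ) := by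
        have k1 : (Q (n:ℤ):ℝ) * (Q ((n:ℤ)+1):ℝ) < (x + (P (n:ℤ):ℝ)) * (Q ((n:ℤ)+1):ℝ) :=
          mul_lt_mul_of_pos_right nb4pre hq1R
        rw [← hfac] at k1
        have k2 := lt_of_mul_lt_mul_left k1 hxA.le
        linarith
      have nb4 : (Q ((n:ℤ)+1) : ℝ) < x + (P (n:ℤ) : ℝ) := by
        have k1 : (x - (P (n:ℤ):ℝ)) * (Q ((n:ℤ)+1):ℝ) < (Q (n:ℤ):ℝ) * (Q ((n:ℤ)+1):ℝ) :=
          mul_lt_mul_of_pos_right nb2' hq1R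
        rw [← hfac, mul_comm (x + (P (n:ℤ):ℝ)) (x - (P (n:ℤ):ℝ))] at k1
        exact lt_of_mul_lt_mul_left k1 hxA2.le
      rw [show ((n+1:ℕ):ℤ) = (n:ℤ)+1 from by push_cast; ring,
        show (n:ℤ)+1-1 = (n:ℤ) from by ring]
      exact ⟨hq1, hdvd1', hdvd2', nb1, nb3, nb4⟩
  -- symmetry about 0
  have sym : ∀ n : ℕ, P (-(n:ℤ) - 1) = P (n:ℤ) ∧ Q (-(n:ℤ)) = Q (n:ℤ) := by
    intro n
    induction n with
    | zero =>
      rw [show ((0:ℕ):ℤ) = 0 from by norm_num, show -(0:ℤ) - 1 = -1 from by ring,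
        show -(0:ℤ) = 0 from by ring]
      exact ⟨key0.symm, rfl⟩
    | succ n ih =>
      obtain ⟨ihp, ihq⟩ := ih
      have hqstep : Q (-(n:ℤ) - 1) = Q ((n:ℤ) + 1) := by
        have h := hQb (-(n:ℤ) - 1) (by omega)
        rw [show -(n:ℤ) - 1 + 1 = -(n:ℤ) from by ring, ihp, ihq] at h
        rw [h, hQf (n:ℤ) (Int.natCast_nonneg n)]
      have hpstep : P (-(n:ℤ) - 2) = P ((n:ℤ) + 1) := by
        have h := hPb (-(n:ℤ) - 1) (by omega)
        have hb := hbb (-(n:ℤ) - 1) (by omega)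
        rw [ihp, hqstep] at hb
        rw [show -(n:ℤ) - 1 - 1 = -(n:ℤ) - 2 from by ring, hb, hqstep, ihp] at h
        have h2 := hPf ((n:ℤ)+1) (by omega)
        rw [hbf ((n:ℤ)+1) (by omega), show (n:ℤ)+1-1 = (n:ℤ) from by ring] at h2
        rw [h, h2]
      refine ⟨?_, ?_⟩
      · rw [show -((n+1:ℕ):ℤ) - 1 = -(n:ℤ) - 2 from by push_cast; ring,
          show ((n+1:ℕ):ℤ) = (n:ℤ) + 1 from by push_cast; ring]
        exact hpstep
      · rw [show -((n+1:ℕ):ℤ) = -(n:ℤ) - 1 from by push_cast; ring,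
          show ((n+1:ℕ):ℤ) = (n:ℤ) + 1 from by push_cast; ring]
        exact hqstep
  have symQ : ∀ i : ℤ, Q (-i) = Q i := by
    intro i
    rcases le_or_gt 0 i with h | h
    · have := (sym i.toNat).2
      rwa [Int.toNat_of_nonneg h] at this
    · have := (sym (-i).toNat).2
      rw [Int.toNat_of_nonneg (by omega)] at this
      rw [show -(-i) = i from by ring] at this
      exact this.symm
  have symP : ∀ i : ℤ, P (-i - 1) = P i := by
    intro i
    rcases le_or_gt 0 i with h | h
    · have := (sym i.toNat).1
      rwa [Int.toNat_of_nonneg h] at this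
    · have := (sym (-i - 1).toNat).1
      rw [Int.toNat_of_nonneg (by omega)] at this
      rw [show -(-i - 1) - 1 = i from by ring] at this
      exact this.symm
  have hT2 : T = 2 * s := by omega
  have hs1 : 1 ≤ s := by omega
  -- periodicity helpers
  have perP : ∀ (k : ℕ) (i : ℤ), P (i + k * T) = P i := by
    intro k
    induction k with
    | zero => intro i; norm_num
    | succ k ih =>
      intro i
      have h1 := (hTper (i + k * T)).1
      rw [show ((k+1:ℕ):ℤ) = (k:ℤ)+1 from by push_cast; ring]
      rw [show i + ((k:ℤ)+1) * T = i + (k:ℤ) * T + T from by ring, h1, ih]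
  have perQ : ∀ (k : ℕ) (i : ℤ), Q (i + k * T) = Q i := by
    intro k
    induction k with
    | zero => intro i; norm_num
    | succ k ih =>
      intro i
      have h1 := (hTper (i + k * T)).2
      rw [show ((k+1:ℕ):ℤ) = (k:ℤ)+1 from by push_cast; ring]
      rw [show i + ((k:ℤ)+1) * T = i + (k:ℤ) * T + T from by ring, h1, ih]
  -- part (a)
  have parta : ∀ i : ℤ, Q (s + i) = Q (s - i) := by
    intro i
    have h1 := (hTper (s + i - T)).2
    rw [show s + i - T + T = s + i from by ring] at h1
    rw [h1, show s + i - T = -(s - i) from by rw [hT2]; ring]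
    exact symQ (s - i)
  -- part (c)
  have partc : P s = P (s - 1) := by
    have h1 := (hTper (s - T)).1
    rw [show s - T + T = s from by ring] at h1
    rw [h1, show s - T = -(s - 1) - 1 from by rw [hT2]; ring]
    exact symP (s - 1)
  -- invariant at s
  have hinvs := inv s.toNat
  rw [Int.toNat_of_nonneg (by omega : (0:ℤ) ≤ s)] at hinvs
  obtain ⟨hqs, hdvd1s, hdvd2s, hb1s, hb2s, hb3s⟩ := hinvs
  -- part (d)
  have partd : Q s ∣ 2 * N := by
    have hps := hPf s (by omega)
    rw [← partc] at hps
    have hdvdP : Q s ∣ 2 * P s := ⟨b s, by linear_combination hps⟩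
    have h2N : 2 * N = 2 * (N - P s ^ 2) + P s * (2 * P s) := by ring
    rw [h2N]
    exact dvd_add (hdvd2s.mul_left 2) (hdvdP.mul_left (P s))
  -- part (b)
  have partb : Q s ≠ Q 0 := by
    intro hQs
    have hQs2 : Q s = 2 := by rw [hQs, hQ0]
    -- P (s-1) is odd
    obtain ⟨c, hc⟩ : (2:ℤ) ∣ N - P (s-1)^2 := by rw [← hQs2]; exact hdvd1s
    have hodd : P (s - 1) % 2 = 1 := by
      rcases Int.even_or_odd (P (s - 1)) with ⟨k, hk⟩ | ⟨k, hk⟩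
      · exfalso
        have : N = 2 * c + 4 * (k * k) := by rw [hk] at hc; linear_combination hc
        omega
      · omega
    -- integer bounds for P (s-1)
    have ib1 : P (s - 1) ≤ r := by
      have h1 : (P (s - 1) : ℝ) < (r : ℝ) + 1 := lt_trans hb1s hrlt1
      have h2 : (P (s - 1) : ℝ) < ((r + 1 : ℤ) : ℝ) := by push_cast; linarith
      have h3 : P (s - 1) < r + 1 := by exact_mod_cast h2
      omega
    have ib2 : r - 1 ≤ P (s - 1) := by
      rw [hQs2] at hb2s
      push_cast at hb2s
      have h1 : ((r - 2 : ℤ) : ℝ) < (P (s - 1) : ℝ) := by push_cast; linarith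
      have h3 : r - 2 < P (s - 1) := by exact_mod_cast h1
      omega
    have hPs1 : P (s - 1) = P (-1) := by omega
    -- forward induction: period s
    have Fwd : ∀ n : ℕ, P ((n:ℤ) - 1 + s) = P ((n:ℤ) - 1) ∧ Q ((n:ℤ) + s) = Q (n:ℤ) := by
      intro n
      induction n with
      | zero =>
        rw [show ((0:ℕ):ℤ) = 0 from by norm_num, show (0:ℤ) - 1 + s = s - 1 from by ring,
          show (0:ℤ) - 1 = -1 from by ring, show (0:ℤ) + s = s from by ring]
        exact ⟨hPs1, hQs⟩
      | succ n ih =>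
        obtain ⟨ihp, ihq⟩ := ih
        have hge : (0:ℤ) ≤ (n:ℤ) + s := by
          have := Int.natCast_nonneg n; omega
        have hge2 : (0:ℤ) ≤ (n:ℤ) := Int.natCast_nonneg n
        have hb' : b ((n:ℤ) + s) = b (n:ℤ) := by
          rw [hbf _ hge, hbf _ hge2,
            show (n:ℤ) + s - 1 = (n:ℤ) - 1 + s from by ring, ihp, ihq]
        have hp' : P ((n:ℤ) + s) = P (n:ℤ) := by
          rw [hPf _ hge, hPf _ hge2, hb',
            show (n:ℤ) + s - 1 = (n:ℤ) - 1 + s from by ring, ihp, ihq]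
        have hq' : Q ((n:ℤ) + 1 + s) = Q ((n:ℤ) + 1) := by
          rw [show (n:ℤ) + 1 + s = ((n:ℤ) + s) + 1 from by ring, hQf _ hge, hQf _ hge2,
            hp', ihq]
        refine ⟨?_, ?_⟩
        · rw [show ((n+1:ℕ):ℤ) - 1 + s = (n:ℤ) + s from by push_cast; ring,
            show ((n+1:ℕ):ℤ) - 1 = (n:ℤ) from by push_cast; ring]
          exact hp'
        · rw [show ((n+1:ℕ):ℤ) + s = (n:ℤ) + 1 + s from by push_cast; ring,
            show ((n+1:ℕ):ℤ) = (n:ℤ) + 1 from by push_cast; ring]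
          exact hq'
    -- extend to all integers via periodicity
    have allP : ∀ i : ℤ, P (i + s) = P i := by
      intro i
      set k : ℕ := i.natAbs with hk
      have hkT : (k:ℤ) * 1 ≤ (k:ℤ) * T := by
        apply mul_le_mul_of_nonneg_left (by omega) (Int.natCast_nonneg k)
      rw [mul_one] at hkT
      have hj : 0 ≤ i + (k:ℤ) * T := by
        have h1 : -(k:ℤ) ≤ i := by omega
        linarith
      set j : ℤ := i + (k:ℤ) * T with hjdef
      have hFwd := (Fwd (j.toNat + 1)).1
      rw [show ((j.toNat + 1 : ℕ):ℤ) - 1 = (j.toNat : ℤ) from by push_cast; ring,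
        Int.toNat_of_nonneg hj] at hFwd
      -- hFwd : P (j + s) = P j
      have e1 : P (i + s + (k:ℤ) * T) = P (i + s) := perP k (i + s)
      have e2 : P (i + (k:ℤ) * T) = P i := perP k i
      rw [show j + s = i + s + (k:ℤ) * T from by rw [hjdef]; ring] at hFwd
      rw [e1] at hFwd
      rw [hFwd, hjdef, e2]
    have allQ : ∀ i : ℤ, Q (i + s) = Q i := by
      intro i
      set k : ℕ := i.natAbs with hk
      have hkT : (k:ℤ) * 1 ≤ (k:ℤ) * T := by
        apply mul_le_mul_of_nonneg_left (by omega) (Int.natCast_nonneg k)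
      rw [mul_one] at hkT
      have hj : 0 ≤ i + (k:ℤ) * T := by
        have h1 : -(k:ℤ) ≤ i := by omega
        linarith
      set j : ℤ := i + (k:ℤ) * T with hjdef
      have hFwd := (Fwd j.toNat).2
      rw [Int.toNat_of_nonneg hj] at hFwd
      have e1 : Q (i + s + (k:ℤ) * T) = Q (i + s) := perQ k (i + s)
      have e2 : Q (i + (k:ℤ) * T) = Q i := perQ k i
      rw [show j + s = i + s + (k:ℤ) * T from by rw [hjdef]; ring] at hFwd
      rw [e1] at hFwd
      rw [hFwd, hjdef, e2]
    have := hTmin s hs1 (fun i => ⟨allP i, allQ i⟩)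
    omega
  exact ⟨parta, partb, partc, partd⟩
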